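/- Let k ≥ 1 be a natural number, σ > 0, Δ ≥ 0, α > 1, and let a, b ∈ ℝ^k with ‖a − b‖ ≤ Δ (Euclidean norm). Define the Gaussian density q_{v,σ}(x) = (2πσ²)^{−k/2} exp(−‖x−v‖²/(2σ²)) on ℝ^k. Then (α−1)⁻¹ · log( ∫_{ℝ^k} q_{a,σ}(x)^α · q_{b,σ}(x)^{1−α} dx ) ≤ αΔ²/(2σ²). -/

import Mathlib

/-- The density of the multivariate Gaussian `N(v, σ²I)` on `ℝ^k`
(with the Euclidean norm), with respect to the Lebesgue measure. -/
noncomputable def multiGaussianDensity (k : ℕ) (σ : ℝ) (v x : EuclideanSpace ℝ (Fin k)) : ℝ :=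
  (2 * Real.pi * σ ^ 2) ^ (-(k : ℝ) / 2) * Real.exp (-‖x - v‖ ^ 2 / (2 * σ ^ 2))

lemma gauss_norm_key {k : ℕ} (α : ℝ) (u d : EuclideanSpace ℝ (Fin k)) :
    α * ‖u - d‖ ^ 2 + (1 - α) * ‖u‖ ^ 2
      = ‖u - α • d‖ ^ 2 + α * (1 - α) * ‖d‖ ^ 2 := by
  have h1 : ‖u - d‖ ^ 2 = ‖u‖ ^ 2 - 2 * inner ℝ u d + ‖d‖ ^ 2 := norm_sub_sq_real u d
  have h2 : ‖u - α • d‖ ^ 2 = ‖u‖ ^ 2 - 2 * (α * inner ℝ u d) + α ^ 2 * ‖d‖ ^ 2 := by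
    rw [norm_sub_sq_real, real_inner_smul_right, norm_smul, mul_pow, Real.norm_eq_abs, sq_abs]
  rw [h1, h2]; ring

lemma gauss_transl_integral {k : ℕ} {σ : ℝ} (hσ : 0 < σ) (c : EuclideanSpace ℝ (Fin k)) :
    ∫ x : EuclideanSpace ℝ (Fin k), Real.exp (-‖x - c‖ ^ 2 / (2 * σ ^ 2))
      = (2 * Real.pi * σ ^ 2) ^ ((k : ℝ) / 2) := by
  have h2σ : (0:ℝ) < 2 * σ ^ 2 := by positivity
  have := MeasureTheory.integral_sub_right_eq_self
    (μ := (MeasureTheory.volume : MeasureTheory.Measure (EuclideanSpace ℝ (Fin k))))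
    (fun y => Real.exp (-(1 / (2 * σ ^ 2)) * ‖y‖ ^ 2)) c
  rw [show (fun x : EuclideanSpace ℝ (Fin k) => Real.exp (-‖x - c‖ ^ 2 / (2 * σ ^ 2)))
      = fun x => Real.exp (-(1 / (2 * σ ^ 2)) * ‖x - c‖ ^ 2) from by
        funext x; ring_nf, this,
    GaussianFourier.integral_rexp_neg_mul_sq_norm (by positivity)]
  rw [finrank_euclideanSpace, Fintype.card_fin]
  congr 1
  rw [one_div, div_eq_mul_inv, inv_inv]; ring

theorem gaussian_mechanism_rdp
    (k : ℕ) (hk : 1 ≤ k) (σ Δ α : ℝ) (hσ : 0 < σ) (hΔ : 0 ≤ Δ) (hα : 1 < α)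
    (a b : EuclideanSpace ℝ (Fin k)) (hab : ‖a - b‖ ≤ Δ) :
    (α - 1)⁻¹ *
        Real.log (∫ x : EuclideanSpace ℝ (Fin k),
          multiGaussianDensity k σ a x ^ α * multiGaussianDensity k σ b x ^ (1 - α)) ≤
      α * Δ ^ 2 / (2 * σ ^ 2) := by
  have h2σ : (0:ℝ) < 2 * σ ^ 2 := by positivity
  have hbase : (0:ℝ) < 2 * Real.pi * σ ^ 2 := by positivity
  set C : ℝ := (2 * Real.pi * σ ^ 2) ^ (-(k : ℝ) / 2) with hCdef
  have hC : 0 < C := Real.rpow_pos_of_pos hbase _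
  set c : EuclideanSpace ℝ (Fin k) := b + α • (a - b) with hcdef
  set E : ℝ := Real.exp (α * (α - 1) * ‖a - b‖ ^ 2 / (2 * σ ^ 2)) with hEdef
  -- pointwise identity
  have hpt : ∀ x : EuclideanSpace ℝ (Fin k),
      multiGaussianDensity k σ a x ^ α * multiGaussianDensity k σ b x ^ (1 - α)
        = E * multiGaussianDensity k σ c x := by
    intro x
    have hxc : x - c = (x - b) - α • (a - b) := by
      rw [hcdef]; abel
    have hxa : x - a = (x - b) - (a - b) := by abel
    have hkey : α * ‖x - a‖ ^ 2 + (1 - α) * ‖x - b‖ ^ 2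
        = ‖x - c‖ ^ 2 + α * (1 - α) * ‖a - b‖ ^ 2 := by
      rw [hxc, hxa]; exact gauss_norm_key α (x - b) (a - b)
    unfold multiGaussianDensity
    rw [Real.mul_rpow hC.le (Real.exp_nonneg _), Real.mul_rpow hC.le (Real.exp_nonneg _),
      ← Real.exp_mul, ← Real.exp_mul, mul_mul_mul_comm, ← Real.rpow_add hC,
      ← Real.exp_add]
    have hα1 : α + (1 - α) = 1 := by ring
    rw [hα1, Real.rpow_one]
    rw [show -‖x - a‖ ^ 2 / (2 * σ ^ 2) * α + -‖x - b‖ ^ 2 / (2 * σ ^ 2) * (1 - α)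
        = -(α * ‖x - a‖ ^ 2 + (1 - α) * ‖x - b‖ ^ 2) / (2 * σ ^ 2) from by ring, hkey]
    rw [show -(‖x - c‖ ^ 2 + α * (1 - α) * ‖a - b‖ ^ 2) / (2 * σ ^ 2)
        = α * (α - 1) * ‖a - b‖ ^ 2 / (2 * σ ^ 2) + -‖x - c‖ ^ 2 / (2 * σ ^ 2) from by ring,
      Real.exp_add]
    ring
  have hint : (∫ x : EuclideanSpace ℝ (Fin k),
      multiGaussianDensity k σ a x ^ α * multiGaussianDensity k σ b x ^ (1 - α)) = E := by
    simp_rw [hpt]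
    rw [MeasureTheory.integral_const_mul]
    have hone : (∫ x : EuclideanSpace ℝ (Fin k), multiGaussianDensity k σ c x) = 1 := by
      unfold multiGaussianDensity
      rw [MeasureTheory.integral_const_mul, gauss_transl_integral hσ,
        ← Real.rpow_add hbase]
      rw [show -(k : ℝ) / 2 + (k : ℝ) / 2 = 0 from by ring, Real.rpow_zero]
    rw [hone, mul_one]
  rw [hint, hEdef, Real.log_exp]
  have hα1 : (0:ℝ) < α - 1 := by linarith
  have heq : (α - 1)⁻¹ * (α * (α - 1) * ‖a - b‖ ^ 2 / (2 * σ ^ 2))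
      = α * ‖a - b‖ ^ 2 / (2 * σ ^ 2) := by
    field_simp
  rw [heq]
  have hsq : ‖a - b‖ ^ 2 ≤ Δ ^ 2 := by
    have := norm_nonneg (a - b)
    nlinarith
  have hα0 : (0:ℝ) ≤ α := by linarith
  gcongr
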